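/- arXiv:0709.2366 — 5 statements merged into one kernel-verified Lean document; each statement's English description precedes it below -/
import Mathlib

section
/- Let I ⊆ ℝ be an interval, let b₀, b₁, b₂ : I → ℝ, and let x, x₁, x₂, x₃ : I → ℝ be differentiable solutions of the Riccati equation ξ'(t) = b₀(t) + b₁(t)ξ(t) + b₂(t)ξ(t)². Assume (x(t) − x₂(t))·(x₁(t) − x₃(t)) ≠ 0 for all t ∈ I. Then the cross-ratio t ↦ ((x(t) − x₁(t))·(x₂(t) − x₃(t))) / ((x(t) − x₂(t))·(x₁(t) − x₃(t))) has derivative zero on I; in particular it is constant on I. This is the nonlinear superposition rule for the Riccati equation: any solution x is determined by three particular solutions x₁, x₂, x₃ and one constant K. -/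
/-- Nonlinear superposition rule for the Riccati equation: the cross-ratio of
four solutions has zero derivative on the interval, hence is constant. -/
theorem riccati_cross_ratio_constant
    (I : Set ℝ) (hI : I.OrdConnected)
    (b₀ b₁ b₂ : ℝ → ℝ) (x x₁ x₂ x₃ : ℝ → ℝ)
    (hx : ∀ t ∈ I, HasDerivAt x (b₀ t + b₁ t * x t + b₂ t * x t ^ 2) t)
    (hx₁ : ∀ t ∈ I, HasDerivAt x₁ (b₀ t + b₁ t * x₁ t + b₂ t * x₁ t ^ 2) t)
    (hx₂ : ∀ t ∈ I, HasDerivAt x₂ (b₀ t + b₁ t * x₂ t + b₂ t * x₂ t ^ 2) t)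
    (hx₃ : ∀ t ∈ I, HasDerivAt x₃ (b₀ t + b₁ t * x₃ t + b₂ t * x₃ t ^ 2) t)
    (hne : ∀ t ∈ I, (x t - x₂ t) * (x₁ t - x₃ t) ≠ 0) :
    (∀ t ∈ I, HasDerivAt
        (fun s => ((x s - x₁ s) * (x₂ s - x₃ s)) / ((x s - x₂ s) * (x₁ s - x₃ s))) 0 t) ∧
    (∀ s ∈ I, ∀ t ∈ I,
        ((x s - x₁ s) * (x₂ s - x₃ s)) / ((x s - x₂ s) * (x₁ s - x₃ s)) =
        ((x t - x₁ t) * (x₂ t - x₃ t)) / ((x t - x₂ t) * (x₁ t - x₃ t))) := by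
  have hderiv : ∀ t ∈ I, HasDerivAt
      (fun s => ((x s - x₁ s) * (x₂ s - x₃ s)) / ((x s - x₂ s) * (x₁ s - x₃ s))) 0 t := by
    intro t ht
    have h2 : x t - x₂ t ≠ 0 := fun h => hne t ht (by rw [h, zero_mul])
    have h3 : x₁ t - x₃ t ≠ 0 := fun h => hne t ht (by rw [h, mul_zero])
    have hN : HasDerivAt (fun s => (x s - x₁ s) * (x₂ s - x₃ s))
        (((b₀ t + b₁ t * x t + b₂ t * x t ^ 2) - (b₀ t + b₁ t * x₁ t + b₂ t * x₁ t ^ 2)) *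
          (x₂ t - x₃ t) + (x t - x₁ t) *
          ((b₀ t + b₁ t * x₂ t + b₂ t * x₂ t ^ 2) - (b₀ t + b₁ t * x₃ t + b₂ t * x₃ t ^ 2))) t :=
      ((hx t ht).sub (hx₁ t ht)).mul ((hx₂ t ht).sub (hx₃ t ht))
    have hD : HasDerivAt (fun s => (x s - x₂ s) * (x₁ s - x₃ s))
        (((b₀ t + b₁ t * x t + b₂ t * x t ^ 2) - (b₀ t + b₁ t * x₂ t + b₂ t * x₂ t ^ 2)) *
          (x₁ t - x₃ t) + (x t - x₂ t) *
          ((b₀ t + b₁ t * x₁ t + b₂ t * x₁ t ^ 2) - (b₀ t + b₁ t * x₃ t + b₂ t * x₃ t ^ 2))) t :=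
      ((hx t ht).sub (hx₂ t ht)).mul ((hx₁ t ht).sub (hx₃ t ht))
    have := hN.div hD (hne t ht)
    refine this.congr_deriv ?_
    rw [div_eq_zero_iff]
    left
    ring
  refine ⟨hderiv, fun s hs t ht => ?_⟩
  have hconv : Convex ℝ I := hI.convex
  have key := Convex.norm_image_sub_le_of_norm_hasDerivWithin_le (C := 0) (f' := fun _ => (0 : ℝ))
    (fun u hu => ((hderiv u hu).hasDerivWithinAt)) (fun u _ => by simp) hconv ht hs
  rw [zero_mul] at key
  have := norm_le_zero_iff.mp key
  linarith [sub_eq_zero.mp this]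
end

section
/- Let k ≠ 0 be a real number and let w₁, w₂ : ℝ × ℝ → ℝ be two solutions of the equation ∂w/∂t + (1/2)(∂w/∂x)² − (k/2)(∂²w/∂x²) = 0, each having a first partial derivative in t and continuous partial derivatives up to second order in x. Then for any real constants ℓ₁, ℓ₂, the function w(t,x) = −k·log( exp(−(w₁(t,x) + ℓ₁)/k) + exp(−(w₂(t,x) + ℓ₂)/k) ) is again a solution of ∂w/∂t + (1/2)(∂w/∂x)² − (k/2)(∂²w/∂x²) = 0. -/
open Real

/-- The variant Burgers equation ∂w/∂t + (1/2)(∂w/∂x)² − (k/2)(∂²w/∂x²) = 0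
for `w : ℝ × ℝ → ℝ` (first variable the time `t`, second the space `x`). -/
def IsBurgersSolution (k : ℝ) (w : ℝ × ℝ → ℝ) : Prop :=
  ∀ t x : ℝ,
    deriv (fun s => w (s, x)) t + (1 / 2) * (deriv (fun y => w (t, y)) x) ^ 2
      - (k / 2) * deriv (deriv (fun y => w (t, y))) x = 0

lemma expPart_hasDerivAt (k : ℝ) (ℓ : ℝ) {g : ℝ → ℝ} {g' x : ℝ}
    (hg : HasDerivAt g g' x) :
    HasDerivAt (fun y => Real.exp (-(g y + ℓ) / k))
      (-(g' / k) * Real.exp (-(g x + ℓ) / k)) x := by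
  have h1 : HasDerivAt (fun y => -(g y + ℓ) / k) (-(g' / k)) x := by
    simpa [neg_div] using ((hg.add_const ℓ).neg).div_const k
  simpa [mul_comm] using h1.exp

/-- Nonlinear superposition rule for the variant of the Burgers equation: from two
solutions `w₁`, `w₂` and constants `ℓ₁`, `ℓ₂` one obtains the new solution
`w = −k log(exp(−(w₁+ℓ₁)/k) + exp(−(w₂+ℓ₂)/k))`. -/
theorem burgers_superposition_rule
    (k : ℝ) (hk : k ≠ 0) (w₁ w₂ : ℝ × ℝ → ℝ)
    (h₁t : ∀ t x : ℝ, DifferentiableAt ℝ (fun s => w₁ (s, x)) t)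
    (h₁x : ∀ t : ℝ, ContDiff ℝ 2 (fun y => w₁ (t, y)))
    (h₂t : ∀ t x : ℝ, DifferentiableAt ℝ (fun s => w₂ (s, x)) t)
    (h₂x : ∀ t : ℝ, ContDiff ℝ 2 (fun y => w₂ (t, y)))
    (hw₁ : IsBurgersSolution k w₁) (hw₂ : IsBurgersSolution k w₂)
    (ℓ₁ ℓ₂ : ℝ) :
    IsBurgersSolution k (fun p =>
      -k * Real.log (Real.exp (-(w₁ p + ℓ₁) / k) + Real.exp (-(w₂ p + ℓ₂) / k))) := by
  intro t x
  -- space profiles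
  set g₁ : ℝ → ℝ := fun y => w₁ (t, y) with hg₁def
  set g₂ : ℝ → ℝ := fun y => w₂ (t, y) with hg₂def
  have hg₁ : ContDiff ℝ 2 g₁ := h₁x t
  have hg₂ : ContDiff ℝ 2 g₂ := h₂x t
  have hdg₁ : Differentiable ℝ g₁ := hg₁.differentiable (by norm_num)
  have hdg₂ : Differentiable ℝ g₂ := hg₂.differentiable (by norm_num)
  have two_eq : (2 : WithTop ℕ∞) = 1 + 1 := rfl
  have hdd₁ : Differentiable ℝ (deriv g₁) := by
    rw [two_eq, contDiff_succ_iff_deriv] at hg₁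
    exact hg₁.2.2.differentiable one_ne_zero
  have hdd₂ : Differentiable ℝ (deriv g₂) := by
    rw [two_eq, contDiff_succ_iff_deriv] at hg₂
    exact hg₂.2.2.differentiable one_ne_zero
  -- exponential parts (in space)
  set u₁ : ℝ → ℝ := fun y => Real.exp (-(g₁ y + ℓ₁) / k) with hu₁def
  set u₂ : ℝ → ℝ := fun y => Real.exp (-(g₂ y + ℓ₂) / k) with hu₂def
  set F : ℝ → ℝ := fun y => u₁ y + u₂ y with hFdef
  have hFpos : ∀ y, 0 < F y := fun y => by positivity
  -- first space derivative, as a function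
  set G : ℝ → ℝ := fun y => (deriv g₁ y * u₁ y + deriv g₂ y * u₂ y) / F y with hGdef
  have hFderiv : ∀ y, HasDerivAt F
      (-(deriv g₁ y / k) * u₁ y + -(deriv g₂ y / k) * u₂ y) y := fun y =>
    ((expPart_hasDerivAt k ℓ₁ (hdg₁ y).hasDerivAt).add
      (expPart_hasDerivAt k ℓ₂ (hdg₂ y).hasDerivAt))
  have hW : ∀ y, HasDerivAt (fun z => -k * Real.log (F z)) (G y) y := by
    intro y
    have hlog : HasDerivAt (fun z => Real.log (F z))
        ((-(deriv g₁ y / k) * u₁ y + -(deriv g₂ y / k) * u₂ y) / F y) y :=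
      (hFderiv y).log (hFpos y).ne'
    have := hlog.const_mul (-k)
    refine this.congr_deriv ?_
    simp only [hGdef]
    field_simp
    ring
  -- deriv in space equals G, as functions
  have hderiv_eq : deriv (fun y => (fun p : ℝ × ℝ =>
      -k * Real.log (Real.exp (-(w₁ p + ℓ₁) / k) + Real.exp (-(w₂ p + ℓ₂) / k))) (t, y)) = G := by
    funext y
    exact (hW y).deriv
  -- second space derivative at x
  set p₁ := deriv g₁ x with hp₁def
  set p₂ := deriv g₂ x with hp₂def
  set q₁ := deriv (deriv g₁) x with hq₁def
  set q₂ := deriv (deriv g₂) x with hq₂def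
  have hnum : HasDerivAt (fun y => deriv g₁ y * u₁ y + deriv g₂ y * u₂ y)
      ((q₁ * u₁ x + p₁ * (-(p₁ / k) * u₁ x)) + (q₂ * u₂ x + p₂ * (-(p₂ / k) * u₂ x))) x := by
    exact ((hdd₁ x).hasDerivAt.mul (expPart_hasDerivAt k ℓ₁ (hdg₁ x).hasDerivAt)).add
      ((hdd₂ x).hasDerivAt.mul (expPart_hasDerivAt k ℓ₂ (hdg₂ x).hasDerivAt))
  have hG' : HasDerivAt G
      ((((q₁ * u₁ x + p₁ * (-(p₁ / k) * u₁ x)) + (q₂ * u₂ x + p₂ * (-(p₂ / k) * u₂ x))) * F x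
        - (p₁ * u₁ x + p₂ * u₂ x) * (-(p₁ / k) * u₁ x + -(p₂ / k) * u₂ x)) / (F x) ^ 2) x := by
    exact hnum.div (hFderiv x) (hFpos x).ne'
  -- time derivative at t
  set a := deriv (fun s => w₁ (s, x)) t with hadef
  set b := deriv (fun s => w₂ (s, x)) t with hbdef
  have hWt : HasDerivAt (fun s => -k * Real.log
      (Real.exp (-(w₁ (s, x) + ℓ₁) / k) + Real.exp (-(w₂ (s, x) + ℓ₂) / k)))
      (-k * ((-(a / k) * Real.exp (-(w₁ (t, x) + ℓ₁) / k)
        + -(b / k) * Real.exp (-(w₂ (t, x) + ℓ₂) / k)) /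
        (Real.exp (-(w₁ (t, x) + ℓ₁) / k) + Real.exp (-(w₂ (t, x) + ℓ₂) / k)))) t := by
    have hU : HasDerivAt (fun s => Real.exp (-(w₁ (s, x) + ℓ₁) / k)
        + Real.exp (-(w₂ (s, x) + ℓ₂) / k))
        (-(a / k) * Real.exp (-(w₁ (t, x) + ℓ₁) / k)
          + -(b / k) * Real.exp (-(w₂ (t, x) + ℓ₂) / k)) t :=
      (expPart_hasDerivAt k ℓ₁ (h₁t t x).hasDerivAt).add
        (expPart_hasDerivAt k ℓ₂ (h₂t t x).hasDerivAt)
    have hpos : (0:ℝ) < Real.exp (-(w₁ (t, x) + ℓ₁) / k) + Real.exp (-(w₂ (t, x) + ℓ₂) / k) := by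
      positivity
    exact (hU.log hpos.ne').const_mul (-k)
  -- Burgers equations for w₁, w₂ at (t,x)
  have e₁ : a + (1/2) * p₁ ^ 2 - (k/2) * q₁ = 0 := hw₁ t x
  have e₂ : b + (1/2) * p₂ ^ 2 - (k/2) * q₂ = 0 := hw₂ t x
  -- assemble
  rw [hWt.deriv, hderiv_eq, hG'.deriv]
  have hu₁x : u₁ x = Real.exp (-(w₁ (t, x) + ℓ₁) / k) := rfl
  have hu₂x : u₂ x = Real.exp (-(w₂ (t, x) + ℓ₂) / k) := rfl
  have hFx : F x = u₁ x + u₂ x := rfl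
  have ha : a = (k * q₁ - p₁ ^ 2) / 2 := by linarith
  have hb : b = (k * q₂ - p₂ ^ 2) / 2 := by linarith
  rw [hGdef]
  simp only [← hu₁x, ← hu₂x, ← hFx, ha, hb]
  have hFne : F x ≠ 0 := (hFpos x).ne'
  field_simp
  ring
end

section
/- Let φ, q₁, q₂ : ℝ → ℝ be differentiable, let G(φ) be the rotation matrix [[cos φ, sin φ],[−sin φ, cos φ]], let Q(t) = diag(q₁(t), q₂(t)), and set X(t) = G(φ(t))·Q(t)·G(φ(t))⁻¹. Then the commutator satisfies X(t)·X'(t) − X'(t)·X(t) = −φ'(t)·(q₂(t) − q₁(t))²·σ for all t, where σ = [[0, 1],[−1, 0]]. -/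
attribute [local instance] Matrix.normedAddCommGroup Matrix.normedSpace

open Real

/-- A 2×2 matrix-valued function built from four scalar functions has the obvious
derivative. -/
lemma hasDerivAt_fin_two_mat (f g h k : ℝ → ℝ) (f' g' h' k' : ℝ) (t : ℝ)
    (hf : HasDerivAt f f' t) (hg : HasDerivAt g g' t)
    (hh : HasDerivAt h h' t) (hk : HasDerivAt k k' t) :
    HasDerivAt (fun s => (!![f s, g s; h s, k s] : Matrix (Fin 2) (Fin 2) ℝ))
      (!![f', g'; h', k']) t := by
  have H := (((hf.smul_const (!![1,0;0,0] : Matrix (Fin 2) (Fin 2) ℝ)).add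
      (hg.smul_const (!![0,1;0,0] : Matrix (Fin 2) (Fin 2) ℝ))).add
      (hh.smul_const (!![0,0;1,0] : Matrix (Fin 2) (Fin 2) ℝ))).add
      (hk.smul_const (!![0,0;0,1] : Matrix (Fin 2) (Fin 2) ℝ))
  have hfun : (fun s => (!![f s, g s; h s, k s] : Matrix (Fin 2) (Fin 2) ℝ))
      = fun s => f s • (!![1,0;0,0] : Matrix (Fin 2) (Fin 2) ℝ)
        + g s • (!![0,1;0,0] : Matrix (Fin 2) (Fin 2) ℝ)
        + h s • (!![0,0;1,0] : Matrix (Fin 2) (Fin 2) ℝ)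
        + k s • (!![0,0;0,1] : Matrix (Fin 2) (Fin 2) ℝ) := by
    funext s
    ext i j
    fin_cases i <;> fin_cases j <;> simp
  have hder : (!![f', g'; h', k'] : Matrix (Fin 2) (Fin 2) ℝ)
      = f' • (!![1,0;0,0] : Matrix (Fin 2) (Fin 2) ℝ)
        + g' • (!![0,1;0,0] : Matrix (Fin 2) (Fin 2) ℝ)
        + h' • (!![0,0;1,0] : Matrix (Fin 2) (Fin 2) ℝ)
        + k' • (!![0,0;0,1] : Matrix (Fin 2) (Fin 2) ℝ) := by
    ext i j
    fin_cases i <;> fin_cases j <;> simp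
  rw [hfun, hder]
  exact H

/-- Generalized polar coordinates X = G Q G⁻¹ on 2×2 symmetric matrices: the matrix
angular momentum is [X, X'] = −φ'(q₂ − q₁)²·σ, with σ = [[0,1],[−1,0]]. -/
theorem matrix_angular_momentum_polar
    (φ q₁ q₂ : ℝ → ℝ)
    (hφ : Differentiable ℝ φ) (hq₁ : Differentiable ℝ q₁) (hq₂ : Differentiable ℝ q₂)
    (G : ℝ → Matrix (Fin 2) (Fin 2) ℝ)
    (hG : ∀ s : ℝ, G s = !![Real.cos (φ s), Real.sin (φ s); -Real.sin (φ s), Real.cos (φ s)])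
    (Q : ℝ → Matrix (Fin 2) (Fin 2) ℝ)
    (hQ : ∀ s : ℝ, Q s = !![q₁ s, 0; 0, q₂ s])
    (X : ℝ → Matrix (Fin 2) (Fin 2) ℝ)
    (hX : ∀ s : ℝ, X s = G s * Q s * (G s)⁻¹) :
    ∀ t : ℝ, X t * deriv X t - deriv X t * X t
      = (-(deriv φ t) * (q₂ t - q₁ t) ^ 2) • (!![0, 1; -1, 0] : Matrix (Fin 2) (Fin 2) ℝ) := by
  intro t
  -- the inverse of the rotation matrix
  have hGinv : ∀ s : ℝ, (G s)⁻¹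
      = !![Real.cos (φ s), -Real.sin (φ s); Real.sin (φ s), Real.cos (φ s)] := by
    intro s
    have pyth := Real.sin_sq_add_cos_sq (φ s)
    apply Matrix.inv_eq_right_inv
    rw [hG s]
    ext i j
    fin_cases i <;> fin_cases j <;>
      simp [Matrix.mul_apply, Fin.sum_univ_succ, Matrix.one_apply] <;>
      (first | ring1 | linear_combination pyth)
  -- explicit entrywise formula for X
  have hXform : ∀ s : ℝ, X s
      = !![q₁ s * Real.cos (φ s) ^ 2 + q₂ s * Real.sin (φ s) ^ 2,
           (q₂ s - q₁ s) * (Real.sin (φ s) * Real.cos (φ s));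
           (q₂ s - q₁ s) * (Real.sin (φ s) * Real.cos (φ s)),
           q₁ s * Real.sin (φ s) ^ 2 + q₂ s * Real.cos (φ s) ^ 2] := by
    intro s
    rw [hX s, hGinv s, hG s, hQ s]
    ext i j
    fin_cases i <;> fin_cases j <;>
      simp [Matrix.mul_apply, Fin.sum_univ_succ] <;> ring1
  have hφt : HasDerivAt φ (deriv φ t) t := (hφ t).hasDerivAt
  have hq₁t : HasDerivAt q₁ (deriv q₁ t) t := (hq₁ t).hasDerivAt
  have hq₂t : HasDerivAt q₂ (deriv q₂ t) t := (hq₂ t).hasDerivAt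
  have hcos : HasDerivAt (fun s => Real.cos (φ s)) (-Real.sin (φ t) * deriv φ t) t := hφt.cos
  have hsin : HasDerivAt (fun s => Real.sin (φ s)) (Real.cos (φ t) * deriv φ t) t := hφt.sin
  -- derivatives of the entries
  have hA : HasDerivAt (fun s => q₁ s * Real.cos (φ s) ^ 2 + q₂ s * Real.sin (φ s) ^ 2)
      (deriv q₁ t * Real.cos (φ t) ^ 2
        - 2 * q₁ t * Real.cos (φ t) * Real.sin (φ t) * deriv φ t
        + deriv q₂ t * Real.sin (φ t) ^ 2
        + 2 * q₂ t * Real.sin (φ t) * Real.cos (φ t) * deriv φ t) t := by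
    have H := (hq₁t.mul (hcos.pow 2)).add (hq₂t.mul (hsin.pow 2))
    refine H.congr_deriv ?_
    simp only [Pi.pow_apply, Pi.mul_apply]
    norm_num
    ring
  have hB : HasDerivAt (fun s => (q₂ s - q₁ s) * (Real.sin (φ s) * Real.cos (φ s)))
      ((deriv q₂ t - deriv q₁ t) * (Real.sin (φ t) * Real.cos (φ t))
        + (q₂ t - q₁ t) * (Real.cos (φ t) ^ 2 - Real.sin (φ t) ^ 2) * deriv φ t) t := by
    have H := (hq₂t.sub hq₁t).mul (hsin.mul hcos)
    refine H.congr_deriv ?_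
    simp only [Pi.pow_apply, Pi.mul_apply]
    norm_num
    ring
  have hD : HasDerivAt (fun s => q₁ s * Real.sin (φ s) ^ 2 + q₂ s * Real.cos (φ s) ^ 2)
      (deriv q₁ t * Real.sin (φ t) ^ 2
        + 2 * q₁ t * Real.sin (φ t) * Real.cos (φ t) * deriv φ t
        + deriv q₂ t * Real.cos (φ t) ^ 2
        - 2 * q₂ t * Real.cos (φ t) * Real.sin (φ t) * deriv φ t) t := by
    have H := (hq₁t.mul (hsin.pow 2)).add (hq₂t.mul (hcos.pow 2))
    refine H.congr_deriv ?_
    simp only [Pi.pow_apply, Pi.mul_apply]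
    norm_num
    ring
  -- derivative of X at t
  have hXd : HasDerivAt X
      (!![deriv q₁ t * Real.cos (φ t) ^ 2
            - 2 * q₁ t * Real.cos (φ t) * Real.sin (φ t) * deriv φ t
            + deriv q₂ t * Real.sin (φ t) ^ 2
            + 2 * q₂ t * Real.sin (φ t) * Real.cos (φ t) * deriv φ t,
          (deriv q₂ t - deriv q₁ t) * (Real.sin (φ t) * Real.cos (φ t))
            + (q₂ t - q₁ t) * (Real.cos (φ t) ^ 2 - Real.sin (φ t) ^ 2) * deriv φ t;
          (deriv q₂ t - deriv q₁ t) * (Real.sin (φ t) * Real.cos (φ t))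
            + (q₂ t - q₁ t) * (Real.cos (φ t) ^ 2 - Real.sin (φ t) ^ 2) * deriv φ t,
          deriv q₁ t * Real.sin (φ t) ^ 2
            + 2 * q₁ t * Real.sin (φ t) * Real.cos (φ t) * deriv φ t
            + deriv q₂ t * Real.cos (φ t) ^ 2
            - 2 * q₂ t * Real.cos (φ t) * Real.sin (φ t) * deriv φ t]) t := by
    have H := hasDerivAt_fin_two_mat _ _ _ _ _ _ _ _ t hA hB hB hD
    have hfun : X = fun s =>
        (!![q₁ s * Real.cos (φ s) ^ 2 + q₂ s * Real.sin (φ s) ^ 2,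
            (q₂ s - q₁ s) * (Real.sin (φ s) * Real.cos (φ s));
            (q₂ s - q₁ s) * (Real.sin (φ s) * Real.cos (φ s)),
            q₁ s * Real.sin (φ s) ^ 2 + q₂ s * Real.cos (φ s) ^ 2] :
          Matrix (Fin 2) (Fin 2) ℝ) := funext hXform
    rw [hfun]
    exact H
  rw [show deriv X t = _ from hXd.deriv, hXform t]
  have pyth : Real.sin (φ t) ^ 2 + Real.cos (φ t) ^ 2 = 1 := Real.sin_sq_add_cos_sq (φ t)
  ext i j
  fin_cases i <;> fin_cases j <;>
    simp [Matrix.mul_apply, Fin.sum_univ_succ] <;>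
    (first
      | ring1
      | linear_combination (-(deriv φ t) * (q₂ t - q₁ t) ^ 2
          * (Real.sin (φ t) ^ 2 + Real.cos (φ t) ^ 2 + 1)) * pyth
      | linear_combination ((deriv φ t) * (q₂ t - q₁ t) ^ 2
          * (Real.sin (φ t) ^ 2 + Real.cos (φ t) ^ 2 + 1)) * pyth)
end

section
/- Let φ, q₁, q₂ : ℝ → ℝ be twice differentiable, let G(φ) = [[cos φ, sin φ],[−sin φ, cos φ]], Q(t) = diag(q₁(t), q₂(t)), and X(t) = G(φ(t))·Q(t)·G(φ(t))⁻¹. Assume X''(t) = 0 and q₂(t) ≠ q₁(t) for all t. Define l(t) = φ'(t)·(q₂(t) − q₁(t))². Then the diagonal variables satisfy the Calogero equations for two interacting particles on a line: q₁''(t) = −2·l(t)² / (q₂(t) − q₁(t))³ and q₂''(t) = 2·l(t)² / (q₂(t) − q₁(t))³ for all t. -/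
attribute [local instance] Matrix.normedAddCommGroup Matrix.normedSpace

/-- Reduction of free matrix motion X'' = 0 in generalized polar coordinates
X = G Q G⁻¹ to the Calogero system: with l = φ'(q₂ − q₁)², the eigenvalues satisfy
q₁'' = −2l²/(q₂ − q₁)³ and q₂'' = 2l²/(q₂ − q₁)³. -/
theorem calogero_from_free_matrix_motion
    (φ q₁ q₂ : ℝ → ℝ)
    (hφ : Differentiable ℝ φ) (hφ' : Differentiable ℝ (deriv φ))
    (hq₁ : Differentiable ℝ q₁) (hq₁' : Differentiable ℝ (deriv q₁))
    (hq₂ : Differentiable ℝ q₂) (hq₂' : Differentiable ℝ (deriv q₂))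
    (G : ℝ → Matrix (Fin 2) (Fin 2) ℝ)
    (hG : ∀ s : ℝ, G s = !![Real.cos (φ s), Real.sin (φ s); -Real.sin (φ s), Real.cos (φ s)])
    (Q : ℝ → Matrix (Fin 2) (Fin 2) ℝ)
    (hQ : ∀ s : ℝ, Q s = !![q₁ s, 0; 0, q₂ s])
    (X : ℝ → Matrix (Fin 2) (Fin 2) ℝ)
    (hX : ∀ s : ℝ, X s = G s * Q s * (G s)⁻¹)
    (hfree : ∀ t : ℝ, deriv (deriv X) t = 0)
    (hne : ∀ t : ℝ, q₂ t ≠ q₁ t)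
    (l : ℝ → ℝ) (hl : ∀ t : ℝ, l t = deriv φ t * (q₂ t - q₁ t) ^ 2) :
    ∀ t : ℝ,
      deriv (deriv q₁) t = -2 * l t ^ 2 / (q₂ t - q₁ t) ^ 3 ∧
      deriv (deriv q₂) t = 2 * l t ^ 2 / (q₂ t - q₁ t) ^ 3 := by
  have hGinv : ∀ u : ℝ, (G u)⁻¹ =
      !![Real.cos (φ u), -Real.sin (φ u); Real.sin (φ u), Real.cos (φ u)] := by
    intro u
    apply Matrix.inv_eq_right_inv
    rw [hG u]
    ext i j
    fin_cases i <;> fin_cases j <;>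
      simp [Matrix.mul_apply, Fin.sum_univ_two] <;> nlinarith [Real.sin_sq_add_cos_sq (φ u)]
  set M1 : Matrix (Fin 2) (Fin 2) ℝ := !![1,0;0,0] with hM1
  set M2 : Matrix (Fin 2) (Fin 2) ℝ := !![0,1;1,0] with hM2
  set M3 : Matrix (Fin 2) (Fin 2) ℝ := !![0,0;0,1] with hM3
  set A : ℝ → ℝ := fun u => Real.cos (φ u)^2 * q₁ u + Real.sin (φ u)^2 * q₂ u with hA
  set B : ℝ → ℝ := fun u => Real.sin (φ u) * Real.cos (φ u) * (q₂ u - q₁ u) with hB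
  set D : ℝ → ℝ := fun u => Real.sin (φ u)^2 * q₁ u + Real.cos (φ u)^2 * q₂ u with hD
  have hXeq : X = fun u => A u • M1 + B u • M2 + D u • M3 := by
    funext u
    rw [hX u, hGinv u, hG u, hQ u]
    ext i j
    fin_cases i <;> fin_cases j <;>
      simp [Matrix.mul_apply, Fin.sum_univ_two, hA, hB, hD, hM1, hM2, hM3] <;> ring
  -- first derivative formulas
  set fA : ℝ → ℝ := fun u => 2 * deriv φ u * Real.sin (φ u) * Real.cos (φ u) * (q₂ u - q₁ u)
      + Real.cos (φ u)^2 * deriv q₁ u + Real.sin (φ u)^2 * deriv q₂ u with hfA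
  set fB : ℝ → ℝ := fun u => deriv φ u * (Real.cos (φ u)^2 - Real.sin (φ u)^2) * (q₂ u - q₁ u)
      + Real.sin (φ u) * Real.cos (φ u) * (deriv q₂ u - deriv q₁ u) with hfB
  set fD : ℝ → ℝ := fun u => -2 * deriv φ u * Real.sin (φ u) * Real.cos (φ u) * (q₂ u - q₁ u)
      + Real.sin (φ u)^2 * deriv q₁ u + Real.cos (φ u)^2 * deriv q₂ u with hfD
  have hφd : ∀ u : ℝ, HasDerivAt φ (deriv φ u) u := fun u => (hφ u).hasDerivAt
  have hq₁d : ∀ u : ℝ, HasDerivAt q₁ (deriv q₁ u) u := fun u => (hq₁ u).hasDerivAt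
  have hq₂d : ∀ u : ℝ, HasDerivAt q₂ (deriv q₂ u) u := fun u => (hq₂ u).hasDerivAt
  have hφ'd : ∀ u : ℝ, HasDerivAt (deriv φ) (deriv (deriv φ) u) u := fun u => (hφ' u).hasDerivAt
  have hq₁'d : ∀ u : ℝ, HasDerivAt (deriv q₁) (deriv (deriv q₁) u) u := fun u => (hq₁' u).hasDerivAt
  have hq₂'d : ∀ u : ℝ, HasDerivAt (deriv q₂) (deriv (deriv q₂) u) u := fun u => (hq₂' u).hasDerivAt
  have hcos : ∀ u : ℝ, HasDerivAt (fun w => Real.cos (φ w)) (-Real.sin (φ u) * deriv φ u) u :=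
    fun u => (Real.hasDerivAt_cos (φ u)).comp u (hφd u)
  have hsin : ∀ u : ℝ, HasDerivAt (fun w => Real.sin (φ w)) (Real.cos (φ u) * deriv φ u) u :=
    fun u => (Real.hasDerivAt_sin (φ u)).comp u (hφd u)
  have hAd : ∀ u : ℝ, HasDerivAt A (fA u) u := by
    intro u
    rw [hA, hfA]
    have h := (((hcos u).pow 2).mul (hq₁d u)).add (((hsin u).pow 2).mul (hq₂d u))
    refine h.congr_deriv ?_
    push_cast
    simp only [Pi.pow_apply, Pi.mul_apply, Pi.sub_apply, Nat.cast_ofNat, Nat.add_one_sub_one, pow_one]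
    ring
  have hBd : ∀ u : ℝ, HasDerivAt B (fB u) u := by
    intro u
    rw [hB, hfB]
    have h := ((hsin u).mul (hcos u)).mul ((hq₂d u).sub (hq₁d u))
    refine h.congr_deriv ?_
    simp only [Pi.mul_apply, Pi.sub_apply]
    ring
  have hDd : ∀ u : ℝ, HasDerivAt D (fD u) u := by
    intro u
    rw [hD, hfD]
    have h := (((hsin u).pow 2).mul (hq₁d u)).add (((hcos u).pow 2).mul (hq₂d u))
    refine h.congr_deriv ?_
    push_cast
    simp only [Pi.pow_apply, Pi.mul_apply, Pi.sub_apply, Nat.cast_ofNat, Nat.add_one_sub_one, pow_one]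
    ring
  have hXd : ∀ u : ℝ, HasDerivAt X (fA u • M1 + fB u • M2 + fD u • M3) u := by
    intro u
    rw [hXeq]
    exact (((hAd u).smul_const M1).add ((hBd u).smul_const M2)).add ((hDd u).smul_const M3)
  have hderivX : deriv X = fun u => fA u • M1 + fB u • M2 + fD u • M3 :=
    funext fun u => (hXd u).deriv
  -- second derivative formulas
  set FA : ℝ → ℝ := fun u =>
      2 * deriv (deriv φ) u * Real.sin (φ u) * Real.cos (φ u) * (q₂ u - q₁ u)
      + 2 * (deriv φ u)^2 * (Real.cos (φ u)^2 - Real.sin (φ u)^2) * (q₂ u - q₁ u)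
      + 4 * deriv φ u * Real.sin (φ u) * Real.cos (φ u) * (deriv q₂ u - deriv q₁ u)
      + Real.cos (φ u)^2 * deriv (deriv q₁) u + Real.sin (φ u)^2 * deriv (deriv q₂) u with hFA
  set FB : ℝ → ℝ := fun u =>
      deriv (deriv φ) u * (Real.cos (φ u)^2 - Real.sin (φ u)^2) * (q₂ u - q₁ u)
      - 4 * Real.sin (φ u) * Real.cos (φ u) * (deriv φ u)^2 * (q₂ u - q₁ u)
      + 2 * deriv φ u * (Real.cos (φ u)^2 - Real.sin (φ u)^2) * (deriv q₂ u - deriv q₁ u)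
      + Real.sin (φ u) * Real.cos (φ u) * (deriv (deriv q₂) u - deriv (deriv q₁) u) with hFB
  set FD : ℝ → ℝ := fun u =>
      -2 * deriv (deriv φ) u * Real.sin (φ u) * Real.cos (φ u) * (q₂ u - q₁ u)
      - 2 * (deriv φ u)^2 * (Real.cos (φ u)^2 - Real.sin (φ u)^2) * (q₂ u - q₁ u)
      - 4 * deriv φ u * Real.sin (φ u) * Real.cos (φ u) * (deriv q₂ u - deriv q₁ u)
      + Real.sin (φ u)^2 * deriv (deriv q₁) u + Real.cos (φ u)^2 * deriv (deriv q₂) u with hFD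
  have hfAd : ∀ u : ℝ, HasDerivAt fA (FA u) u := by
    intro u
    rw [hfA, hFA]
    have h := (((((((hφ'd u).const_mul 2).mul (hsin u)).mul (hcos u)).mul
        ((hq₂d u).sub (hq₁d u))).add
      (((hcos u).pow 2).mul (hq₁'d u))).add
      (((hsin u).pow 2).mul (hq₂'d u)))
    refine h.congr_deriv ?_
    push_cast
    simp only [Pi.pow_apply, Pi.mul_apply, Pi.sub_apply, Nat.cast_ofNat, Nat.add_one_sub_one, pow_one]
    ring
  have hfBd : ∀ u : ℝ, HasDerivAt fB (FB u) u := by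
    intro u
    rw [hfB, hFB]
    have h := ((((hφ'd u).mul (((hcos u).pow 2).sub ((hsin u).pow 2))).mul
        ((hq₂d u).sub (hq₁d u))).add
      (((hsin u).mul (hcos u)).mul ((hq₂'d u).sub (hq₁'d u))))
    refine h.congr_deriv ?_
    push_cast
    simp only [Pi.pow_apply, Pi.mul_apply, Pi.sub_apply, Nat.cast_ofNat, Nat.add_one_sub_one, pow_one]
    ring
  have hfDd : ∀ u : ℝ, HasDerivAt fD (FD u) u := by
    intro u
    rw [hfD, hFD]
    have h := (((((((hφ'd u).const_mul (-2)).mul (hsin u)).mul (hcos u)).mul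
        ((hq₂d u).sub (hq₁d u))).add
      (((hsin u).pow 2).mul (hq₁'d u))).add
      (((hcos u).pow 2).mul (hq₂'d u)))
    refine h.congr_deriv ?_
    push_cast
    simp only [Pi.pow_apply, Pi.mul_apply, Pi.sub_apply, Nat.cast_ofNat, Nat.add_one_sub_one, pow_one]
    ring
  have hXdd : ∀ u : ℝ, HasDerivAt (deriv X) (FA u • M1 + FB u • M2 + FD u • M3) u := by
    intro u
    rw [hderivX]
    exact (((hfAd u).smul_const M1).add ((hfBd u).smul_const M2)).add ((hfDd u).smul_const M3)
  have hzero : ∀ u : ℝ, FA u • M1 + FB u • M2 + FD u • M3 = 0 := fun u =>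
    ((hXdd u).deriv).symm.trans (hfree u)
  have eFA : ∀ u : ℝ, FA u = 0 := by
    intro u
    have h := congrFun (congrFun (hzero u) 0) 0
    simpa [hM1, hM2, hM3, Matrix.add_apply, Matrix.smul_apply] using h
  have eFB : ∀ u : ℝ, FB u = 0 := by
    intro u
    have h := congrFun (congrFun (hzero u) 0) 1
    simpa [hM1, hM2, hM3, Matrix.add_apply, Matrix.smul_apply] using h
  have eFD : ∀ u : ℝ, FD u = 0 := by
    intro u
    have h := congrFun (congrFun (hzero u) 1) 1
    simpa [hM1, hM2, hM3, Matrix.add_apply, Matrix.smul_apply] using h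
  -- scalar algebra
  intro t
  have hr : q₂ t - q₁ t ≠ 0 := sub_ne_zero.2 (hne t)
  have pyth : Real.sin (φ t) ^ 2 + Real.cos (φ t) ^ 2 = 1 := Real.sin_sq_add_cos_sq (φ t)
  have h1 := eFA t; rw [hFA] at h1; simp only [] at h1
  have h2 := eFB t; rw [hFB] at h2; simp only [] at h2
  have h3 := eFD t; rw [hFD] at h3; simp only [] at h3
  have hsum : deriv (deriv q₁) t + deriv (deriv q₂) t = 0 := by
    linear_combination h1 + h3 - (deriv (deriv q₁) t + deriv (deriv q₂) t) * pyth
  have hdiff : deriv (deriv q₂) t - deriv (deriv q₁) t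
      = 4 * (deriv φ t)^2 * (q₂ t - q₁ t) := by
    linear_combination (Real.cos (φ t)^2 - Real.sin (φ t)^2) * (h3 - h1)
      + 4 * Real.cos (φ t) * Real.sin (φ t) * h2
      - (1 + Real.sin (φ t)^2 + Real.cos (φ t)^2) *
        (deriv (deriv q₂) t - deriv (deriv q₁) t - 4 * (deriv φ t)^2 * (q₂ t - q₁ t)) * pyth
  have hx : deriv (deriv q₁) t = -(2 * deriv φ t ^ 2 * (q₂ t - q₁ t)) := by linarith
  have hy : deriv (deriv q₂) t = 2 * deriv φ t ^ 2 * (q₂ t - q₁ t) := by linarith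
  constructor
  · rw [hl t, hx]
    field_simp
  · rw [hl t, hy]
    field_simp
end

section
/- Let q₁, p₁, q₂, p₂ : ℝ → ℝ be differentiable functions satisfying q₁' = 0, p₁' = 0, q₂'(t) = −2(q₁(t)² + p₁(t)²)·p₂(t), p₂'(t) = 2(q₁(t)² + p₁(t)²)·q₂(t), with initial condition q₁(0)² + p₁(0)² + q₂(0)² + p₂(0)² = 1. Define u = −p₁² − q₁² + p₂² + q₂², v = 2(p₁p₂ + q₁q₂), z = 2(p₁q₂ − q₁p₂) along the solution. Then: (i) q₁(t)² + p₁(t)² + q₂(t)² + p₂(t)² = 1 for all t (the flow preserves S³); and (ii) the reduced variables satisfy du/dt = 0, dv/dt = (1 − u)·z, and dz/dt = −(1 − u)·v for all t. -/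
/-- The classical limit of the quantum SU(2) dynamics: the flow of
Γ = 2(q₁²+p₁²)(q₂∂/∂p₂ − p₂∂/∂q₂) preserves S³, and the invariant variables
u = −p₁²−q₁²+p₂²+q₂², v = 2(p₁p₂+q₁q₂), z = 2(p₁q₂−q₁p₂) obey the reduced
dynamics u' = 0, v' = (1−u)z, z' = −(1−u)v. -/
theorem quantum_su2_reduced_dynamics
    (q₁ p₁ q₂ p₂ : ℝ → ℝ)
    (hq₁ : ∀ t : ℝ, HasDerivAt q₁ 0 t)
    (hp₁ : ∀ t : ℝ, HasDerivAt p₁ 0 t)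
    (hq₂ : ∀ t : ℝ, HasDerivAt q₂ (-2 * (q₁ t ^ 2 + p₁ t ^ 2) * p₂ t) t)
    (hp₂ : ∀ t : ℝ, HasDerivAt p₂ (2 * (q₁ t ^ 2 + p₁ t ^ 2) * q₂ t) t)
    (hinit : q₁ 0 ^ 2 + p₁ 0 ^ 2 + q₂ 0 ^ 2 + p₂ 0 ^ 2 = 1)
    (u v z : ℝ → ℝ)
    (hu : ∀ t, u t = -(p₁ t) ^ 2 - q₁ t ^ 2 + p₂ t ^ 2 + q₂ t ^ 2)
    (hv : ∀ t, v t = 2 * (p₁ t * p₂ t + q₁ t * q₂ t))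
    (hz : ∀ t, z t = 2 * (p₁ t * q₂ t - q₁ t * p₂ t)) :
    (∀ t : ℝ, q₁ t ^ 2 + p₁ t ^ 2 + q₂ t ^ 2 + p₂ t ^ 2 = 1) ∧
    (∀ t : ℝ,
      HasDerivAt u 0 t ∧
      HasDerivAt v ((1 - u t) * z t) t ∧
      HasDerivAt z (-(1 - u t) * v t) t) := by
  have hN : ∀ t : ℝ, HasDerivAt (fun t => q₁ t ^ 2 + p₁ t ^ 2 + q₂ t ^ 2 + p₂ t ^ 2) 0 t := by
    intro t
    have h := (((((hq₁ t).pow 2).add ((hp₁ t).pow 2)).add ((hq₂ t).pow 2)).add ((hp₂ t).pow 2))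
    refine h.congr_deriv ?_
    ring
  have hconst : ∀ t : ℝ, q₁ t ^ 2 + p₁ t ^ 2 + q₂ t ^ 2 + p₂ t ^ 2 = 1 := by
    intro t
    have := is_const_of_deriv_eq_zero (f := fun t => q₁ t ^ 2 + p₁ t ^ 2 + q₂ t ^ 2 + p₂ t ^ 2)
      (fun x => (hN x).differentiableAt) (fun x => (hN x).deriv) t 0
    simpa [this] using hinit
  refine ⟨hconst, fun t => ?_⟩
  have hu' : u = fun t => -(p₁ t) ^ 2 - q₁ t ^ 2 + p₂ t ^ 2 + q₂ t ^ 2 := funext hu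
  have hv' : v = fun t => 2 * (p₁ t * p₂ t + q₁ t * q₂ t) := funext hv
  have hz' : z = fun t => 2 * (p₁ t * q₂ t - q₁ t * p₂ t) := funext hz
  have h1mu : 1 - u t = 2 * (q₁ t ^ 2 + p₁ t ^ 2) := by
    have := hconst t; rw [hu]; linarith
  refine ⟨?_, ?_, ?_⟩
  · rw [hu']
    have h := ((((hp₁ t).pow 2).neg.sub ((hq₁ t).pow 2)).add ((hp₂ t).pow 2)).add ((hq₂ t).pow 2)
    refine h.congr_deriv ?_
    ring
  · rw [hv']
    have h := (((hp₁ t).mul (hp₂ t)).add ((hq₁ t).mul (hq₂ t))).const_mul 2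
    refine h.congr_deriv ?_
    rw [h1mu, hz]
    ring
  · rw [hz']
    have h := (((hp₁ t).mul (hq₂ t)).sub ((hq₁ t).mul (hp₂ t))).const_mul 2
    refine h.congr_deriv ?_
    rw [h1mu, hv]
    ring
end
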